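/- Purified distance to a projected state: for a subnormalized state ρ (positive semidefinite, 0 < tr ρ ≤ 1) and a positive semidefinite operator Π ≤ 1, the purified distance satisfies P(ρ, ΠρΠ) ≤ √((tr ρ)² − (tr(Π²ρ))²) / √(tr ρ). -/

import Mathlib

open Matrix
open scoped ComplexOrder Classical

noncomputable section

/-- PSD square root (junk value 0 if not PSD). -/
def psdSqrt {n : Type*} [Fintype n] [DecidableEq n] (A : Matrix n n ℂ) : Matrix n n ℂ :=
  if h : A.PosSemidef then
    (h.1.eigenvectorUnitary : Matrix n n ℂ) * diagonal ((↑) ∘ (Real.sqrt ·) ∘ h.1.eigenvalues) *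
      (star h.1.eigenvectorUnitary : Matrix n n ℂ)
  else 0

/-- the PSD square root, as in `psdSqrt`. -/
def Matrix.PosSemidef.sqrt {n : Type*} [Fintype n] [DecidableEq n] {A : Matrix n n ℂ}
    (h : A.PosSemidef) : Matrix n n ℂ :=
  (h.1.eigenvectorUnitary : Matrix n n ℂ) * diagonal ((↑) ∘ (Real.sqrt ·) ∘ h.1.eigenvalues) *
    (star h.1.eigenvectorUnitary : Matrix n n ℂ)

section
open scoped MatrixOrder

lemma Matrix.PosSemidef.sqrt_eq_cfc {n : Type*} [Fintype n] [DecidableEq n] {A : Matrix n n ℂ}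
    (h : A.PosSemidef) : h.sqrt = CFC.sqrt A := by
  rw [CFC.sqrt_eq_cfc, cfc_nnreal_eq_real _ A, h.1.cfc_eq, IsHermitian.cfc, Unitary.conjStarAlgAut_apply,
    Matrix.PosSemidef.sqrt]
  congr 3
  funext i
  simp [Real.coe_sqrt, Real.coe_toNNReal', max_eq_left (h.eigenvalues_nonneg i)]

lemma Matrix.PosSemidef.posSemidef_sqrt {n : Type*} [Fintype n] [DecidableEq n]
    {A : Matrix n n ℂ} (h : A.PosSemidef) : h.sqrt.PosSemidef := by
  rw [h.sqrt_eq_cfc]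
  exact (CFC.sqrt_nonneg A).posSemidef

lemma Matrix.PosSemidef.sqrt_mul_self {n : Type*} [Fintype n] [DecidableEq n]
    {A : Matrix n n ℂ} (h : A.PosSemidef) : h.sqrt * h.sqrt = A := by
  rw [h.sqrt_eq_cfc]
  exact CFC.sqrt_mul_sqrt_self A h.nonneg

lemma Matrix.PosSemidef.eq_sqrt_of_sq_eq {n : Type*} [Fintype n] [DecidableEq n]
    {A B : Matrix n n ℂ} (hA : A.PosSemidef) (hB : B.PosSemidef) (hAB : A ^ 2 = B) :
    A = hB.sqrt := by
  rw [hB.sqrt_eq_cfc]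
  exact ((CFC.sqrt_eq_iff B A hB.nonneg hA.nonneg).2 (by rw [← hAB, pow_two])).symm

end

/-- trace norm `‖A‖₁ = tr √(A Aᴴ)`. -/
def trNorm {n : Type*} [Fintype n] [DecidableEq n] (A : Matrix n n ℂ) : ℝ :=
  ((psdSqrt (A * A.conjTranspose)).trace).re

/-- generalized fidelity `F̄(ρ,σ) = ‖√ρ√σ‖₁ + √((1 − tr ρ)(1 − tr σ))`
on subnormalized states. -/
def genFid {n : Type*} [Fintype n] [DecidableEq n] (A B : Matrix n n ℂ) : ℝ :=
  trNorm (psdSqrt A * psdSqrt B) +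
    Real.sqrt ((1 - A.trace.re) * (1 - B.trace.re))

/-- purified distance `P(ρ,σ) = √(1 − F̄(ρ,σ)²)`. -/
def purDist {n : Type*} [Fintype n] [DecidableEq n] (A B : Matrix n n ℂ) : ℝ :=
  Real.sqrt (1 - (genFid A B) ^ 2)

lemma psd_trace_nonneg {n : Type*} [Fintype n] [DecidableEq n]
    {A : Matrix n n ℂ} (hA : A.PosSemidef) : 0 ≤ A.trace := by
  rw [Matrix.trace]
  refine Finset.sum_nonneg fun i _ => ?_
  have h := hA.diag_nonneg (i := i)
  simpa [Matrix.mulVec, dotProduct, Pi.single_apply] using h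

lemma psd_trace_mul_nonneg {n : Type*} [Fintype n] [DecidableEq n]
    {A B : Matrix n n ℂ} (hA : A.PosSemidef) (hB : B.PosSemidef) :
    0 ≤ (A * B).trace := by
  have h1 : A * B = hA.sqrt * (hA.sqrt * B) := by
    rw [← mul_assoc, hA.sqrt_mul_self]
  rw [h1, trace_mul_comm]
  have h2 := hB.conjTranspose_mul_mul_same hA.sqrt
  rw [hA.posSemidef_sqrt.1] at h2
  exact psd_trace_nonneg h2

set_option maxHeartbeats 1000000 in
/-- Purified distance to a projected state: for a subnormalized state `ρ` with
`0 < tr ρ ≤ 1` and `0 ≤ P ≤ 1`,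
`P(ρ, PρP) ≤ √((tr ρ)² − (tr(P²ρ))²) / √(tr ρ)`. -/
theorem purDist_projection_bound {n : Type*} [Fintype n] [DecidableEq n]
    (ρ P : Matrix n n ℂ)
    (hρ : ρ.PosSemidef) (hρpos : 0 < ρ.trace.re) (hρtr : ρ.trace.re ≤ 1)
    (hP : P.PosSemidef) (hP1 : ((1 : Matrix n n ℂ) - P).PosSemidef) :
    purDist ρ (P * ρ * P) ≤
      Real.sqrt ((ρ.trace.re) ^ 2 - (((P * P * ρ).trace).re) ^ 2)
        / Real.sqrt (ρ.trace.re) := by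
  set R := hρ.sqrt with hR
  have hRh : R.conjTranspose = R := hρ.posSemidef_sqrt.1
  have hRR : R * R = ρ := hρ.sqrt_mul_self
  -- σ := P ρ P is PSD
  have hσ : (P * ρ * P).PosSemidef := by
    have := hρ.conjTranspose_mul_mul_same P
    rwa [hP.1] at this
  set S := hσ.sqrt with hS
  have hSh : S.conjTranspose = S := hσ.posSemidef_sqrt.1
  have hSS : S * S = P * ρ * P := hσ.sqrt_mul_self
  -- M := R P R is PSD, and (R S)(R S)ᴴ = M²
  set M := R * P * R with hM
  have hMpsd : M.PosSemidef := by
    have := hP.conjTranspose_mul_mul_same R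
    rwa [hRh] at this
  -- the trace norm term equals tr(P ρ).re
  have hkey : trNorm (psdSqrt ρ * psdSqrt (P * ρ * P)) = ((P * ρ).trace).re := by
    have e1 : psdSqrt ρ = R := dif_pos hρ
    have e2 : psdSqrt (P * ρ * P) = S := dif_pos hσ
    rw [trNorm, e1, e2]
    have e3 : R * S * (R * S).conjTranspose = M ^ 2 := by
      rw [conjTranspose_mul, hRh, hSh]
      calc R * S * (S * R) = R * (S * S) * R := by
            simp only [mul_assoc]
        _ = R * (P * ρ * P) * R := by rw [hSS]
        _ = R * (P * (R * R) * P) * R := by rw [hRR]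
        _ = M ^ 2 := by rw [hM, pow_two]; simp only [mul_assoc]
    have hpsd2 : (R * S * (R * S).conjTranspose).PosSemidef :=
      posSemidef_self_mul_conjTranspose _
    have e4 : psdSqrt (R * S * (R * S).conjTranspose) = M := by
      rw [psdSqrt, dif_pos hpsd2]
      exact (hMpsd.eq_sqrt_of_sq_eq hpsd2 e3.symm).symm
    rw [e4]
    have e5 : M.trace = (P * ρ).trace := by
      rw [hM, trace_mul_cycle, hRR, trace_mul_comm]
    rw [e5]
  -- trace identities and inequalities
  set t := ρ.trace.re with ht
  set s := ((P * P * ρ).trace).re with hs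
  set a := ((P * ρ).trace).re with ha
  have hσtr : (P * ρ * P).trace = (P * P * ρ).trace := trace_mul_cycle P ρ P
  -- 0 ≤ s
  have hs0 : (0 : ℝ) ≤ s := by
    have := psd_trace_nonneg hσ
    rw [hσtr] at this
    exact this.1
  -- P - P*P is PSD
  have hPP : (P - P * P).PosSemidef := by
    set T := hP.sqrt with hT
    have hTh : T.conjTranspose = T := hP.posSemidef_sqrt.1
    have hTT : T * T = P := hP.sqrt_mul_self
    have h1 := hP1.conjTranspose_mul_mul_same T
    rw [hTh] at h1
    have h2 : T * ((1 : Matrix n n ℂ) - P) * T = P - P * P := by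
      rw [mul_sub, sub_mul, mul_one]
      rw [show T * P * T = P * P by rw [← hTT]; simp only [mul_assoc], hTT]
    rwa [h2] at h1
  -- s ≤ a
  have hsa : s ≤ a := by
    have h1 := psd_trace_mul_nonneg hPP hρ
    rw [sub_mul, trace_sub] at h1
    have := h1.1
    simp only [Complex.sub_re, Complex.zero_re] at this
    linarith [this]
  -- a ≤ t
  have hat : a ≤ t := by
    have h1 := psd_trace_mul_nonneg hP1 hρ
    rw [sub_mul, trace_sub, one_mul] at h1
    have := h1.1
    simp only [Complex.sub_re, Complex.zero_re] at this
    linarith [this]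
  have hst : s ≤ t := le_trans hsa hat
  -- reduce to a scalar inequality
  set r := Real.sqrt ((1 - t) * (1 - s)) with hr
  have hgf : genFid ρ (P * ρ * P) = a + r := by
    rw [genFid, hkey, hσtr]
  have hr0 : 0 ≤ r := Real.sqrt_nonneg _
  have hr2 : r ^ 2 = (1 - t) * (1 - s) := by
    rw [hr, Real.sq_sqrt]
    exact mul_nonneg (by linarith) (by linarith)
  have hr1 : 1 - t ≤ r := by
    rw [hr]
    calc 1 - t = Real.sqrt ((1 - t) * (1 - t)) := by
          exact (Real.sqrt_mul_self (by linarith : (0:ℝ) ≤ 1 - t)).symm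
      _ ≤ Real.sqrt ((1 - t) * (1 - s)) := by
          apply Real.sqrt_le_sqrt
          apply mul_le_mul_of_nonneg_left (by linarith) (by linarith)
  have hts : (0 : ℝ) ≤ t ^ 2 - s ^ 2 := by nlinarith
  have hmain : 1 - (a + r) ^ 2 ≤ (t ^ 2 - s ^ 2) / t := by
    rw [le_div_iff₀ hρpos]
    nlinarith [mul_nonneg (mul_nonneg hρpos.le hs0) (sub_nonneg.2 hr1),
      mul_nonneg (mul_nonneg (by linarith : (0:ℝ) ≤ 1 - t) hs0)
        (sub_nonneg.2 hst),
      mul_nonneg (mul_nonneg (sub_nonneg.2 hsa) (by linarith : (0:ℝ) ≤ a + s + 2 * r))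
        hρpos.le]
  calc purDist ρ (P * ρ * P) = Real.sqrt (1 - (a + r) ^ 2) := by rw [purDist, hgf]
    _ ≤ Real.sqrt ((t ^ 2 - s ^ 2) / t) := Real.sqrt_le_sqrt hmain
    _ = Real.sqrt (t ^ 2 - s ^ 2) / Real.sqrt t := Real.sqrt_div hts t
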